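/- Let Φ₁, …, Φ_N be bare measurement channels on n×n complex matrices and let Φ = Φ_N ∘ ⋯ ∘ Φ₁ be their composition. If ρ is a nonzero n×n complex matrix and λ is a complex number with |λ| = 1 such that Φ(ρ) = λ • ρ, then Φ_i(ρ) = ρ for every i = 1, …, N. -/

import Mathlib

open Matrix
open scoped ComplexOrder

/-- A bare measurement channel: `Φ(ρ) = Σ_α √E_α ρ √E_α` for some POVM `(E_α)`. -/
def IsBareChannel {n : ℕ}
    (Φ : Matrix (Fin n) (Fin n) ℂ → Matrix (Fin n) (Fin n) ℂ) : Prop :=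
  ∃ (k : ℕ) (E : Fin k → Matrix (Fin n) (Fin n) ℂ)
    (hE : ∀ α, (E α).PosSemidef),
      (∑ α, E α) = 1 ∧ ∀ ρ, Φ ρ = ∑ α, ((hE α).1.eigenvectorUnitary.1 *
        diagonal ((↑) ∘ (Real.sqrt ∘ (hE α).1.eigenvalues)) *
        (star (hE α).1.eigenvectorUnitary : Matrix (Fin n) (Fin n) ℂ)) * ρ *
        ((hE α).1.eigenvectorUnitary.1 *
        diagonal ((↑) ∘ (Real.sqrt ∘ (hE α).1.eigenvalues)) *
        (star (hE α).1.eigenvectorUnitary : Matrix (Fin n) (Fin n) ℂ))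

namespace Matrix.PosSemidef

variable {n : ℕ} {A : Matrix (Fin n) (Fin n) ℂ}

/-- The explicit square root of a PSD matrix (replaces the removed `PosSemidef.sqrt`). -/
noncomputable def sqrt (hA : A.PosSemidef) : Matrix (Fin n) (Fin n) ℂ :=
  hA.1.eigenvectorUnitary.1 * diagonal ((↑) ∘ (Real.sqrt ∘ hA.1.eigenvalues)) *
    (star hA.1.eigenvectorUnitary : Matrix (Fin n) (Fin n) ℂ)

lemma posSemidef_sqrt (hA : A.PosSemidef) : hA.sqrt.PosSemidef := by
  unfold sqrt
  have hd := (posSemidef_diagonal_iff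
    (d := ((↑) : ℝ → ℂ) ∘ (Real.sqrt ∘ hA.1.eigenvalues))).mpr
    (fun i => Complex.zero_le_real.mpr (Real.sqrt_nonneg _))
  exact hd.mul_mul_conjTranspose_same _

lemma sqrt_mul_self (hA : A.PosSemidef) : hA.sqrt * hA.sqrt = A := by
  unfold sqrt
  set U := hA.1.eigenvectorUnitary
  set D : Matrix (Fin n) (Fin n) ℂ := diagonal ((↑) ∘ (Real.sqrt ∘ hA.1.eigenvalues))
  have hU : (star U : Matrix (Fin n) (Fin n) ℂ) * U.1 = 1 := Unitary.coe_star_mul_self U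
  have hD : D * D = diagonal (RCLike.ofReal ∘ hA.1.eigenvalues) := by
    rw [diagonal_mul_diagonal]
    congr 1
    ext i
    simp [← Complex.ofReal_mul, Real.mul_self_sqrt (hA.eigenvalues_nonneg i)]
  calc U.1 * D * (star U : Matrix (Fin n) (Fin n) ℂ) * (U.1 * D * (star U : Matrix (Fin n) (Fin n) ℂ))
      = U.1 * (D * ((star U : Matrix (Fin n) (Fin n) ℂ) * U.1) * D) * (star U : Matrix (Fin n) (Fin n) ℂ) := by
        simp only [Matrix.mul_assoc]
    _ = A := by
        rw [hU, Matrix.mul_one, hD]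
        conv_rhs => rw [hA.1.spectral_theorem]
        rfl

end Matrix.PosSemidef

namespace Stmt7Aux

variable {n : ℕ}

/-- The matrix space embedded as a Euclidean (Hilbert–Schmidt) space. -/
noncomputable def e (M : Matrix (Fin n) (Fin n) ℂ) :
    EuclideanSpace ℂ (Fin n × Fin n) :=
  (WithLp.equiv 2 _).symm fun p => M p.1 p.2

lemma e_inj {X Y : Matrix (Fin n) (Fin n) ℂ} (h : e X = e Y) : X = Y := by
  ext i j
  exact congrArg (fun v : EuclideanSpace ℂ (Fin n × Fin n) => v (i, j)) h

lemma e_zero : e (0 : Matrix (Fin n) (Fin n) ℂ) = 0 := rfl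

lemma inner_e (X Y : Matrix (Fin n) (Fin n) ℂ) :
    @inner ℂ _ _ (e X) (e Y) = (Xᴴ * Y).trace := by
  simp only [e, PiLp.inner_apply, Matrix.trace, Matrix.diag, Matrix.mul_apply,
    RCLike.inner_apply, Fintype.sum_prod_type, WithLp.equiv_symm_apply, PiLp.toLp_apply,
    Matrix.conjTranspose_apply, Finset.sum_mul, Finset.mul_sum]
  rw [Finset.sum_comm]
  exact Finset.sum_congr rfl fun _ _ => Finset.sum_congr rfl fun _ _ => mul_comm _ _

lemma norm_e_sq (X : Matrix (Fin n) (Fin n) ℂ) :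
    (Xᴴ * X).trace = ((‖e X‖ ^ 2 : ℝ) : ℂ) := by
  rw [← inner_e]
  exact_mod_cast inner_self_eq_norm_sq_to_K (e X)

/-- Families of matrices as one big Euclidean space. -/
noncomputable def e2 {k : ℕ} (M : Fin k → Matrix (Fin n) (Fin n) ℂ) :
    EuclideanSpace ℂ (Fin k × (Fin n × Fin n)) :=
  (WithLp.equiv 2 _).symm fun p => M p.1 p.2.1 p.2.2

lemma inner_e2 {k : ℕ} (M M' : Fin k → Matrix (Fin n) (Fin n) ℂ) :
    @inner ℂ _ _ (e2 M) (e2 M') = ∑ α, @inner ℂ _ _ (e (M α)) (e (M' α)) := by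
  simp only [e2, e, PiLp.inner_apply, WithLp.equiv_symm_apply, PiLp.toLp_apply,
    Fintype.sum_prod_type]

lemma norm_e2_sq {k : ℕ} (M : Fin k → Matrix (Fin n) (Fin n) ℂ) :
    @inner ℂ _ _ (e2 M) (e2 M) = ((‖e2 M‖ ^ 2 : ℝ) : ℂ) := by
  exact_mod_cast inner_self_eq_norm_sq_to_K (e2 M)

section Channel

variable {Φ : Matrix (Fin n) (Fin n) ℂ → Matrix (Fin n) (Fin n) ℂ}
variable {k : ℕ} {E : Fin k → Matrix (Fin n) (Fin n) ℂ}

/-- Self-adjointness of a bare channel w.r.t. the HS inner product. -/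
lemma selfadj (hE : ∀ α, (E α).PosSemidef)
    (hrep : ∀ ρ, Φ ρ = ∑ α, (hE α).sqrt * ρ * (hE α).sqrt)
    (X Y : Matrix (Fin n) (Fin n) ℂ) :
    @inner ℂ _ _ (e X) (e (Φ Y)) = @inner ℂ _ _ (e (Φ X)) (e Y) := by
  rw [inner_e, inner_e, hrep Y, hrep X]
  rw [Matrix.mul_sum, Matrix.trace_sum]
  rw [Matrix.conjTranspose_sum, Matrix.sum_mul, Matrix.trace_sum]
  refine Finset.sum_congr rfl fun α _ => ?_
  set S := (hE α).sqrt with hSdef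
  have hH : Sᴴ = S := (hE α).posSemidef_sqrt.1.eq
  have h1 : (S * X * S)ᴴ * Y = S * ((Xᴴ * (S * Y))) := by
    simp only [Matrix.conjTranspose_mul, hH]
    noncomm_ring
  rw [h1, Matrix.trace_mul_comm S (Xᴴ * (S * Y))]
  congr 1
  noncomm_ring

/-- The Gram identity: `⟪X, Φ Y⟫ = ⟪(Q_α X Q_α)_α, (Q_α Y Q_α)_α⟫` with `Q = E^{1/4}`. -/
lemma innerPhi (hE : ∀ α, (E α).PosSemidef)
    (hrep : ∀ ρ, Φ ρ = ∑ α, (hE α).sqrt * ρ * (hE α).sqrt)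
    (X Y : Matrix (Fin n) (Fin n) ℂ) :
    @inner ℂ _ _ (e X) (e (Φ Y)) =
      @inner ℂ _ _
        (e2 fun α => (hE α).posSemidef_sqrt.sqrt * X * (hE α).posSemidef_sqrt.sqrt)
        (e2 fun α => (hE α).posSemidef_sqrt.sqrt * Y * (hE α).posSemidef_sqrt.sqrt) := by
  rw [inner_e, inner_e2, hrep Y, Matrix.mul_sum, Matrix.trace_sum]
  refine Finset.sum_congr rfl fun α _ => ?_
  rw [inner_e]
  set Q := (hE α).posSemidef_sqrt.sqrt with hQdef
  have hQH : Qᴴ = Q := (hE α).posSemidef_sqrt.posSemidef_sqrt.1.eq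
  have hQQ : Q * Q = (hE α).sqrt := (hE α).posSemidef_sqrt.sqrt_mul_self
  have h1 : (Q * X * Q)ᴴ * (Q * Y * Q) = Q * ((Xᴴ * ((Q * Q) * Y)) * Q) := by
    simp only [Matrix.conjTranspose_mul, hQH]
    noncomm_ring
  have h2 : Xᴴ * ((hE α).sqrt * Y * (hE α).sqrt) = (Xᴴ * ((Q * Q) * Y)) * (Q * Q) := by
    rw [hQQ]
    noncomm_ring
  rw [h1, Matrix.trace_mul_comm Q ((Xᴴ * ((Q * Q) * Y)) * Q), h2]
  congr 1
  noncomm_ring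

/-- `Σ_α ‖S_α Y‖² = ‖Y‖²`. -/
lemma sum_norm_left (hE : ∀ α, (E α).PosSemidef) (hsum : (∑ α, E α) = 1)
    (Y : Matrix (Fin n) (Fin n) ℂ) :
    ∑ α, ‖e ((hE α).sqrt * Y)‖ ^ 2 = ‖e Y‖ ^ 2 := by
  have key : ∑ α, (((‖e ((hE α).sqrt * Y)‖ ^ 2 : ℝ)) : ℂ) = ((‖e Y‖ ^ 2 : ℝ) : ℂ) := by
    simp only [← norm_e_sq]
    calc ∑ α, ((((hE α).sqrt * Y)ᴴ * ((hE α).sqrt * Y)).trace)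
        = (Yᴴ * ((∑ α, E α) * Y)).trace := by
          rw [Matrix.sum_mul, Matrix.mul_sum, Matrix.trace_sum]
          refine Finset.sum_congr rfl fun α _ => ?_
          have h1 : ((hE α).sqrt * Y)ᴴ * ((hE α).sqrt * Y)
              = Yᴴ * (((hE α).sqrt * (hE α).sqrt) * Y) := by
            simp only [Matrix.conjTranspose_mul, (hE α).posSemidef_sqrt.1.eq]
            noncomm_ring
          rw [h1, (hE α).sqrt_mul_self]
      _ = (Yᴴ * Y).trace := by rw [hsum, Matrix.one_mul]
  exact_mod_cast key

/-- `Σ_α ‖Y S_α‖² = ‖Y‖²`. -/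
lemma sum_norm_right (hE : ∀ α, (E α).PosSemidef) (hsum : (∑ α, E α) = 1)
    (Y : Matrix (Fin n) (Fin n) ℂ) :
    ∑ α, ‖e (Y * (hE α).sqrt)‖ ^ 2 = ‖e Y‖ ^ 2 := by
  have key : ∑ α, (((‖e (Y * (hE α).sqrt)‖ ^ 2 : ℝ)) : ℂ) = ((‖e Y‖ ^ 2 : ℝ) : ℂ) := by
    simp only [← norm_e_sq]
    calc ∑ α, (((Y * (hE α).sqrt)ᴴ * (Y * (hE α).sqrt)).trace)
        = (Yᴴ * (Y * (∑ α, E α))).trace := by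
          rw [Matrix.mul_sum, Matrix.mul_sum, Matrix.trace_sum]
          refine Finset.sum_congr rfl fun α _ => ?_
          set S := (hE α).sqrt with hSdef
          have hH : Sᴴ = S := (hE α).posSemidef_sqrt.1.eq
          have h1 : (Y * S)ᴴ * (Y * S) = S * ((Yᴴ * (Y * S))) := by
            simp only [Matrix.conjTranspose_mul, hH]
            noncomm_ring
          have h2 : Yᴴ * (Y * E α) = (Yᴴ * (Y * S)) * S := by
            rw [← (hE α).sqrt_mul_self]
            noncomm_ring
          rw [h1, Matrix.trace_mul_comm S (Yᴴ * (Y * S)), h2]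
      _ = (Yᴴ * Y).trace := by rw [hsum, Matrix.mul_one]
  exact_mod_cast key

/-- A bare channel is a contraction in HS norm. -/
lemma norm_phi_le (hE : ∀ α, (E α).PosSemidef) (hsum : (∑ α, E α) = 1)
    (hrep : ∀ ρ, Φ ρ = ∑ α, (hE α).sqrt * ρ * (hE α).sqrt)
    (X : Matrix (Fin n) (Fin n) ℂ) :
    ‖e (Φ X)‖ ≤ ‖e X‖ := by
  have key : @inner ℂ _ _ (e (Φ X)) (e (Φ X)) =
      ∑ α, @inner ℂ _ _ (e ((hE α).sqrt * Φ X)) (e (X * (hE α).sqrt)) := by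
    rw [inner_e]
    nth_rewrite 2 [hrep X]
    rw [Matrix.mul_sum, Matrix.trace_sum]
    refine Finset.sum_congr rfl fun α _ => ?_
    rw [inner_e]
    congr 1
    simp only [Matrix.conjTranspose_mul, (hE α).posSemidef_sqrt.1.eq]
    noncomm_ring
  have h1 : ‖e (Φ X)‖ ^ 2 = (∑ α, @inner ℂ _ _
      (e ((hE α).sqrt * Φ X)) (e (X * (hE α).sqrt))).re := by
    rw [← key]
    have h := inner_self_eq_norm_sq (𝕜 := ℂ) (e (Φ X))
    simpa using h.symm
  have h2 : (∑ α, @inner ℂ _ _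
      (e ((hE α).sqrt * Φ X)) (e (X * (hE α).sqrt))).re ≤
      (‖e (Φ X)‖ ^ 2 + ‖e X‖ ^ 2) / 2 := by
    rw [Complex.re_sum]
    calc ∑ α, (@inner ℂ _ _ (e ((hE α).sqrt * Φ X)) (e (X * (hE α).sqrt))).re
        ≤ ∑ α, (‖e ((hE α).sqrt * Φ X)‖ ^ 2 + ‖e (X * (hE α).sqrt)‖ ^ 2) / 2 := by
          refine Finset.sum_le_sum fun α _ => ?_
          have hle : (@inner ℂ _ _ (e ((hE α).sqrt * Φ X)) (e (X * (hE α).sqrt))).re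
              ≤ ‖e ((hE α).sqrt * Φ X)‖ * ‖e (X * (hE α).sqrt)‖ := by
            simpa using re_inner_le_norm (𝕜 := ℂ)
              (e ((hE α).sqrt * Φ X)) (e (X * (hE α).sqrt))
          nlinarith [sq_nonneg (‖e ((hE α).sqrt * Φ X)‖ - ‖e (X * (hE α).sqrt)‖)]
      _ = (‖e (Φ X)‖ ^ 2 + ‖e X‖ ^ 2) / 2 := by
          rw [← Finset.sum_div, Finset.sum_add_distrib,
            sum_norm_left hE hsum (Φ X), sum_norm_right hE hsum X]
  have h3 : ‖e (Φ X)‖ ^ 2 ≤ ‖e X‖ ^ 2 := by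
    rw [h1] at *
    linarith
  exact le_of_pow_le_pow_left₀ two_ne_zero (norm_nonneg _) h3

/-- Norm preservation forces fixed point. -/
lemma phi_fix (hE : ∀ α, (E α).PosSemidef) (hsum : (∑ α, E α) = 1)
    (hrep : ∀ ρ, Φ ρ = ∑ α, (hE α).sqrt * ρ * (hE α).sqrt)
    (X : Matrix (Fin n) (Fin n) ℂ) (h : ‖e (Φ X)‖ = ‖e X‖) :
    Φ X = X := by
  by_cases hX : X = 0
  · subst hX
    rw [hrep]
    simp
  set c : ℝ := ‖e X‖ with hc
  have hc0 : 0 < c := by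
    rw [hc, norm_pos_iff]
    exact fun h0 => hX (e_inj (h0.trans e_zero.symm))
  set U : Fin k → Matrix (Fin n) (Fin n) ℂ :=
    fun α => (hE α).posSemidef_sqrt.sqrt * X * (hE α).posSemidef_sqrt.sqrt with hU
  set V : Fin k → Matrix (Fin n) (Fin n) ℂ :=
    fun α => (hE α).posSemidef_sqrt.sqrt * Φ X * (hE α).posSemidef_sqrt.sqrt with hV
  -- a = ⟪X, ΦX⟫ = ‖e2 U‖²
  have ha : @inner ℂ _ _ (e X) (e (Φ X)) = ((‖e2 U‖ ^ 2 : ℝ) : ℂ) := by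
    rw [innerPhi hE hrep X X, ← hU, norm_e2_sq]
  -- ⟪X, Φ(ΦX)⟫ = ‖ΦX‖² = c²
  have hb : @inner ℂ _ _ (e X) (e (Φ (Φ X))) = ((c ^ 2 : ℝ) : ℂ) := by
    rw [selfadj hE hrep X (Φ X)]
    rw [show @inner ℂ _ _ (e (Φ X)) (e (Φ X)) = (((‖e (Φ X)‖ ^ 2 : ℝ)) : ℂ) from by
      exact_mod_cast inner_self_eq_norm_sq_to_K (e (Φ X))]
    rw [h]
  -- Cauchy–Schwarz on the Gram form
  have hcs : ‖@inner ℂ _ _ (e X) (e (Φ (Φ X)))‖ ≤ ‖e2 U‖ * ‖e2 V‖ := by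
    rw [innerPhi hE hrep X (Φ X), ← hU, ← hV]
    exact norm_inner_le_norm (e2 U) (e2 V)
  have hcsq : c ^ 2 ≤ ‖e2 U‖ * ‖e2 V‖ := by
    rw [hb] at hcs
    rwa [Complex.norm_real, Real.norm_eq_abs,
      abs_of_nonneg (by positivity : (0:ℝ) ≤ c ^ 2)] at hcs
  -- ‖e2 V‖ ≤ c
  have hV2 : ‖e2 V‖ ^ 2 ≤ c ^ 2 := by
    have hv : @inner ℂ _ _ (e (Φ X)) (e (Φ (Φ X))) = ((‖e2 V‖ ^ 2 : ℝ) : ℂ) := by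
      rw [innerPhi hE hrep (Φ X) (Φ X), ← hV, norm_e2_sq]
    have hre : ‖e2 V‖ ^ 2 = (@inner ℂ _ _ (e (Φ X)) (e (Φ (Φ X)))).re := by
      rw [hv, Complex.ofReal_re]
    rw [hre]
    calc (@inner ℂ _ _ (e (Φ X)) (e (Φ (Φ X)))).re
        ≤ ‖e (Φ X)‖ * ‖e (Φ (Φ X))‖ := by
          simpa using re_inner_le_norm (𝕜 := ℂ) (e (Φ X)) (e (Φ (Φ X)))
      _ ≤ c * c := by
          have hfx : ‖e (Φ (Φ X))‖ ≤ ‖e (Φ X)‖ := norm_phi_le hE hsum hrep (Φ X)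
          rw [h] at hfx ⊢
          exact mul_le_mul_of_nonneg_left hfx hc0.le
      _ = c ^ 2 := (sq c).symm
  have hVc : ‖e2 V‖ ≤ c := le_of_pow_le_pow_left₀ two_ne_zero hc0.le hV2
  -- so ‖e2 U‖ ≥ c
  have hUc : c ≤ ‖e2 U‖ := by
    by_contra hlt
    push_neg at hlt
    have hstep : ‖e2 U‖ * ‖e2 V‖ < c * c :=
      lt_of_le_of_lt (mul_le_mul_of_nonneg_left hVc (norm_nonneg _))
        (mul_lt_mul_of_pos_right hlt hc0)
    have hcontra : c ^ 2 < c ^ 2 := lt_of_le_of_lt hcsq (by rw [sq]; exact hstep)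
    exact lt_irrefl _ hcontra
  -- but also ‖e2 U‖² = re ⟪X, ΦX⟫ ≤ c²
  have hUle : ‖e2 U‖ ^ 2 ≤ c ^ 2 := by
    have hre : ‖e2 U‖ ^ 2 = (@inner ℂ _ _ (e X) (e (Φ X))).re := by
      rw [ha, Complex.ofReal_re]
    rw [hre]
    calc (@inner ℂ _ _ (e X) (e (Φ X))).re
        ≤ ‖e X‖ * ‖e (Φ X)‖ := by
          simpa using re_inner_le_norm (𝕜 := ℂ) (e X) (e (Φ X))
      _ = c ^ 2 := by rw [h, ← hc, sq]
  have hUeq : ‖e2 U‖ ^ 2 = c ^ 2 := le_antisymm hUle (pow_le_pow_left₀ hc0.le hUc 2)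
  -- re ⟪X, ΦX⟫ = c²
  have hrea : (@inner ℂ _ _ (e X) (e (Φ X))).re = c ^ 2 := by
    rw [ha, Complex.ofReal_re, hUeq]
  -- conclude via ‖e(ΦX) - eX‖² = 0
  have hdiff : ‖e (Φ X) - e X‖ ^ 2 = 0 := by
    rw [norm_sub_sq (𝕜 := ℂ)]
    have hsym : (@inner ℂ _ _ (e (Φ X)) (e X)).re = c ^ 2 := by
      have := inner_conj_symm (𝕜 := ℂ) (e X) (e (Φ X))
      have hreeq : (@inner ℂ _ _ (e (Φ X)) (e X)).re
          = (@inner ℂ _ _ (e X) (e (Φ X))).re := by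
        rw [← this, Complex.conj_re]
      rw [hreeq, hrea]
    simp only [RCLike.re_to_complex]
    rw [hsym, h]
    ring
  have heq : e (Φ X) = e X := by
    rw [← sub_eq_zero]
    exact norm_eq_zero.mp (pow_eq_zero_iff two_ne_zero |>.mp hdiff)
  exact e_inj heq

end Channel

/-- Restated versions using `IsBareChannel`. -/
lemma bare_contraction {Φ : Matrix (Fin n) (Fin n) ℂ → Matrix (Fin n) (Fin n) ℂ}
    (hb : IsBareChannel Φ) (X : Matrix (Fin n) (Fin n) ℂ) :
    ‖e (Φ X)‖ ≤ ‖e X‖ := by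
  obtain ⟨k, E, hE, hsum, hrep⟩ := hb
  exact norm_phi_le hE hsum hrep X

lemma bare_fix {Φ : Matrix (Fin n) (Fin n) ℂ → Matrix (Fin n) (Fin n) ℂ}
    (hb : IsBareChannel Φ) (X : Matrix (Fin n) (Fin n) ℂ)
    (h : ‖e (Φ X)‖ = ‖e X‖) : Φ X = X := by
  obtain ⟨k, E, hE, hsum, hrep⟩ := hb
  exact phi_fix hE hsum hrep X h

/-- Unfolding the foldl of compositions. -/
lemma foldl_comp_apply (l : List (Matrix (Fin n) (Fin n) ℂ → Matrix (Fin n) (Fin n) ℂ))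
    (f : Matrix (Fin n) (Fin n) ℂ → Matrix (Fin n) (Fin n) ℂ)
    (x : Matrix (Fin n) (Fin n) ℂ) :
    (l.foldl (fun f g => g ∘ f) f) x = l.foldl (fun y g => g y) (f x) := by
  induction l generalizing f with
  | nil => rfl
  | cons g t ih => simpa using ih (g ∘ f)

lemma foldl_contraction (l : List (Matrix (Fin n) (Fin n) ℂ → Matrix (Fin n) (Fin n) ℂ))
    (hl : ∀ g ∈ l, IsBareChannel g) (x : Matrix (Fin n) (Fin n) ℂ) :
    ‖e (l.foldl (fun y g => g y) x)‖ ≤ ‖e x‖ := by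
  induction l generalizing x with
  | nil => simp
  | cons g t ih =>
    simp only [List.foldl_cons]
    calc ‖e (t.foldl (fun y g => g y) (g x))‖ ≤ ‖e (g x)‖ :=
          ih (fun h hh => hl h (List.mem_cons_of_mem _ hh)) (g x)
      _ ≤ ‖e x‖ := bare_contraction (hl g (List.mem_cons_self)) x

lemma chain_fix (l : List (Matrix (Fin n) (Fin n) ℂ → Matrix (Fin n) (Fin n) ℂ))
    (hl : ∀ g ∈ l, IsBareChannel g) (x : Matrix (Fin n) (Fin n) ℂ)
    (hnorm : ‖e x‖ ≤ ‖e (l.foldl (fun y g => g y) x)‖) :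
    ∀ g ∈ l, g x = x := by
  induction l with
  | nil => intro g hg; exact absurd hg (List.not_mem_nil)
  | cons g t ih =>
    simp only [List.foldl_cons] at hnorm
    have ht : ∀ h ∈ t, IsBareChannel h := fun h hh => hl h (List.mem_cons_of_mem _ hh)
    have hg : IsBareChannel g := hl g (List.mem_cons_self)
    have h1 : ‖e (t.foldl (fun y g => g y) (g x))‖ ≤ ‖e (g x)‖ :=
      foldl_contraction t ht (g x)
    have h2 : ‖e (g x)‖ ≤ ‖e x‖ := bare_contraction hg x
    have heq : ‖e (g x)‖ = ‖e x‖ := le_antisymm h2 (le_trans hnorm h1)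
    have hfix : g x = x := bare_fix hg x heq
    intro f hf
    rcases List.mem_cons.mp hf with rfl | hf'
    · exact hfix
    · refine ih ht ?_ f hf'
      rwa [hfix] at hnorm

end Stmt7Aux

theorem stmt_7 (n N : ℕ)
    (Φs : Fin N → (Matrix (Fin n) (Fin n) ℂ → Matrix (Fin n) (Fin n) ℂ))
    (hbare : ∀ i, IsBareChannel (Φs i))
    (Φ : Matrix (Fin n) (Fin n) ℂ → Matrix (Fin n) (Fin n) ℂ)
    (hΦ : Φ = (List.ofFn Φs).foldl (fun f g => g ∘ f) id)
    (ρ : Matrix (Fin n) (Fin n) ℂ) (hρ : ρ ≠ 0)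
    (lam : ℂ) (hlam : ‖lam‖ = 1)
    (heig : Φ ρ = lam • ρ) :
    ∀ i, Φs i ρ = ρ := by
  have hfold : Φ ρ = (List.ofFn Φs).foldl (fun y g => g y) ρ := by
    rw [hΦ]
    exact Stmt7Aux.foldl_comp_apply (List.ofFn Φs) id ρ
  have hval : (List.ofFn Φs).foldl (fun y g => g y) ρ = lam • ρ := by
    rw [← hfold, heig]
  have hmem : ∀ g ∈ List.ofFn Φs, IsBareChannel g := by
    intro g hg
    obtain ⟨i, rfl⟩ := List.mem_ofFn.mp hg
    exact hbare i
  have hsmul : Stmt7Aux.e (lam • ρ) = lam • Stmt7Aux.e ρ := rfl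
  have hnorm : ‖Stmt7Aux.e ρ‖ ≤ ‖Stmt7Aux.e ((List.ofFn Φs).foldl (fun y g => g y) ρ)‖ := by
    rw [hval, hsmul, norm_smul]
    simp [hlam]
  have hall := Stmt7Aux.chain_fix (List.ofFn Φs) hmem ρ hnorm
  intro i
  exact hall (Φs i) ((List.mem_ofFn.mpr ⟨i, rfl⟩))
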